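/- Let G be a minimally 3-connected braced polygonal circuit on n vertices (so G has exactly n - 2 braces). Then every dual polygon G* of G is 3-connected. -/

import Mathlib

/-- A boundary edge of the `n`-gon: an edge of the form `{i, i+1}`. -/
def IsBoundaryEdge (n : ℕ) (e : Sym2 (ZMod n)) : Prop := ∃ i : ZMod n, e = s(i, i + 1)

/-- The braced polygon graph on the cyclically ordered vertex set `ZMod n`:
the boundary Hamilton cycle `{i, i+1}` together with the set `B` of braces. -/
def bpGraph (n : ℕ) (B : Finset (Sym2 (ZMod n))) : SimpleGraph (ZMod n) :=
  SimpleGraph.fromEdgeSet ((↑B : Set (Sym2 (ZMod n))) ∪ {e | IsBoundaryEdge n e})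

/-- A graph is 3-connected if it has at least 4 vertices and deleting any
at most 2 vertices leaves it connected. -/
def ThreeConnected {V : Type*} [Fintype V] (G : SimpleGraph V) : Prop :=
  4 ≤ Fintype.card V ∧
    ∀ s : Finset V, s.card ≤ 2 → (G.induce ((↑s : Set V)ᶜ)).Connected

/-- A braced polygon graph is minimally 3-connected if it is 3-connected and
deleting any brace destroys 3-connectivity. -/
def MinThreeConnectedBP (n : ℕ) [NeZero n] (B : Finset (Sym2 (ZMod n))) : Prop :=
  ThreeConnected (bpGraph n B) ∧ ∀ e ∈ B, ¬ ThreeConnected (bpGraph n (B.erase e))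

set_option linter.unusedSectionVars false
set_option linter.unusedVariables false


namespace Stmt15

variable {n : ℕ} [NeZero n]

/-- clockwise distance from `u` to `w` -/
def rho (u w : ZMod n) : ℕ := (w - u).val

lemma rho_lt (u w : ZMod n) : rho u w < n := ZMod.val_lt _

lemma rho_self (u : ZMod n) : rho u u = 0 := by simp [rho]

lemma rho_eq_zero_iff {u w : ZMod n} : rho u w = 0 ↔ w = u := by
  rw [rho, ZMod.val_eq_zero, sub_eq_zero]

lemma rho_inj {u w w' : ZMod n} (h : rho u w = rho u w') : w = w' := by
  have h2 : ((rho u w : ℕ) : ZMod n) = ((rho u w' : ℕ) : ZMod n) := by rw [h]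
  rw [rho, rho, ZMod.natCast_val, ZMod.natCast_val, ZMod.cast_id, ZMod.cast_id,
    sub_left_inj] at h2
  exact h2

lemma eq_add_rho (u w : ZMod n) : w = u + (rho u w : ℕ) := by
  rw [rho, ZMod.natCast_val, ZMod.cast_id]; ring

lemma rho_add_nat (u : ZMod n) {i : ℕ} (h : i < n) : rho u (u + (i : ℕ)) = i := by
  rw [rho, add_sub_cancel_left, ZMod.val_cast_of_lt h]

/-- subtraction rule -/
lemma rho_sub {u v w : ZMod n} (h : rho u v ≤ rho u w) : rho v w = rho u w - rho u v := by
  have h2 : w - v = (w - u) - (v - u) := by ring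
  show (w - v).val = _
  rw [h2, ZMod.val_sub h]; rfl

lemma rho_rev {u v : ZMod n} (h : v ≠ u) : rho u v + rho v u = n := by
  have h0 : v - u ≠ 0 := sub_ne_zero.mpr h
  have : NeZero (v - u) := ⟨h0⟩
  have h1 : u - v = -(v - u) := by ring
  rw [rho, rho, h1, ZMod.val_neg_of_ne_zero]
  have := ZMod.val_lt (v - u)
  have h2 : 1 ≤ (v - u).val := by
    rcases Nat.eq_zero_or_pos (v - u).val with h3 | h3
    · exact absurd (ZMod.val_eq_zero _ |>.mp h3) h0
    · exact h3
  omega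

lemma rho_pos_of_ne {u v : ZMod n} (h : v ≠ u) : 0 < rho u v := by
  rcases Nat.eq_zero_or_pos (rho u v) with h3 | h3
  · exact absurd (rho_eq_zero_iff.mp h3) h
  · exact h3

/-- `w` lies strictly between `x` and `y` going clockwise from `x`. -/
def Btw (x w y : ZMod n) : Prop := 0 < rho x w ∧ rho x w < rho x y

lemma Btw.ne_left {x w y : ZMod n} (h : Btw x w y) : w ≠ x := by
  intro he; subst he
  have := h.1
  rw [rho_self] at this
  exact absurd this (lt_irrefl 0)

lemma Btw.ne_right {x w y : ZMod n} (h : Btw x w y) : w ≠ y := by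
  intro he; subst he; exact absurd h.2 (lt_irrefl _)

lemma btw_trichotomy (x y w : ZMod n) (hxy : y ≠ x) :
    w = x ∨ w = y ∨ Btw x w y ∨ Btw y w x := by
  rcases Nat.eq_zero_or_pos (rho x w) with h0 | h0
  · exact Or.inl (rho_eq_zero_iff.mp h0)
  rcases lt_trichotomy (rho x w) (rho x y) with h | h | h
  · exact Or.inr (Or.inr (Or.inl ⟨h0, h⟩))
  · exact Or.inr (Or.inl (rho_inj (h.trans rfl)))
  · right; right; right
    have hle : rho x y ≤ rho x w := le_of_lt h
    have hsub := rho_sub hle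
    constructor
    · rw [hsub]; omega
    · have h1 : w ≠ x := by
        intro he; rw [he, rho_self] at h0; exact absurd h0 (lt_irrefl 0)
      have h2 := rho_rev hxy
      have h3 := rho_rev h1
      have h4 : rho y w = rho x w - rho x y := hsub
      have h5 : rho y x = n - rho x y := by omega
      rw [h4, h5]
      have := rho_lt x w
      have hxy0 : 0 < rho x y := rho_pos_of_ne hxy
      omega

/-- coordinates: translation of Btw along a base point -/
lemma btw_of_coords {a : ZMod n} {i j k : ℕ} (hij : i < k) (hkj : k < j) (hj : j < n) :
    Btw (a + (i : ZMod n)) (a + (k : ZMod n)) (a + (j : ZMod n)) := by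
  have hi : i < n := by omega
  have hk : k < n := by omega
  have h1 : rho a (a + (i:ℕ)) = i := rho_add_nat a hi
  have h2 : rho a (a + (k:ℕ)) = k := rho_add_nat a hk
  have h3 : rho a (a + (j:ℕ)) = j := rho_add_nat a hj
  have e1 : rho (a + (i:ZMod n)) (a + (k:ZMod n)) = k - i := by
    rw [rho_sub (by omega : rho a (a + (i:ZMod n)) ≤ rho a (a + (k:ZMod n))), h1, h2]
  have e2 : rho (a + (i:ZMod n)) (a + (j:ZMod n)) = j - i := by
    rw [rho_sub (by omega : rho a (a + (i:ZMod n)) ≤ rho a (a + (j:ZMod n))), h1, h3]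
  exact ⟨by omega, by omega⟩

/-- coordinates of a point strictly between two points of a segment -/
lemma coords_of_btw {a x y w : ZMod n} {i j : ℕ} (hx : x = a + (i:ZMod n)) (hy : y = a + (j:ZMod n))
    (hij : i < j) (hj : j < n) (h : Btw x w y) :
    rho a w = i + rho x w ∧ i < rho a w ∧ rho a w < j := by
  have hi : i < n := by omega
  have h1 : rho a x = i := by rw [hx]; exact rho_add_nat a hi
  have h3 : rho a y = j := by rw [hy]; exact rho_add_nat a hj
  have e2 : rho x y = j - i := by
    rw [rho_sub (by omega : rho a x ≤ rho a y), h1, h3]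
  set r := rho x w with hr
  have hxw := h.1
  have hxwy := h.2
  -- w = x + r = a + (i + r)
  have hw : w = a + ((i + r : ℕ) : ZMod n) := by
    have h6 := eq_add_rho x w
    rw [h6, ← hr, hx]; push_cast; ring
  have hlt : i + r < n := by omega
  have : rho a w = i + r := by rw [hw]; exact rho_add_nat a hlt
  exact ⟨this, by omega, by omega⟩

end Stmt15

section Graph
open SimpleGraph

variable {V : Type*}

/-- first-switch lemma: a walk from a `π`-vertex to a non-`π`-vertex passes an
edge switching `π`. -/
lemma walk_switch {H : SimpleGraph V} {C : Set V} (π : ↥C → Prop) :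
    ∀ {p q : ↥C}, (H.induce C).Walk p q → π p → ¬ π q →
      ∃ a b : ↥C, H.Adj a.val b.val ∧ π a ∧ ¬ π b := by
  intro p q w
  induction w with
  | nil => intro hp hq; exact absurd hp hq
  | @cons u x q h rest ih =>
    intro hp hq
    by_cases hx : π x
    · exact ih hx hq
    · refine ⟨u, x, ?_, hp, hx⟩
      simpa using h

lemma connected_of_anchor {H : SimpleGraph V} {C : Set V} (z : ↥C)
    (h : ∀ w : ↥C, (H.induce C).Reachable w z) : (H.induce C).Connected :=
  (SimpleGraph.connected_iff_exists_forall_reachable _).mpr ⟨z, fun w => (h w).symm⟩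

end Graph

namespace Stmt15
open SimpleGraph

variable {n : ℕ} [NeZero n]

lemma chain_reach {H : SimpleGraph (ZMod n)} {C : Set (ZMod n)}
    (hadj : ∀ w : ZMod n, w ∈ C → (w + 1) ∈ C → H.Adj w (w + 1)) (p : ZMod n) :
    ∀ (m : ℕ), (∀ i : ℕ, i ≤ m → (p + (i : ZMod n)) ∈ C) →
      ∀ (u v : ↥C), u.val = p → v.val = p + ((m : ℕ) : ZMod n) →
      (H.induce C).Reachable u v := by
  intro m
  induction m with
  | zero =>
    intro hmem u v hu hv
    have : u = v := Subtype.ext (by rw [hu, hv]; simp)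
    rw [this]
  | succ m ih =>
    intro hmem u v hu hv
    have hmem' : ∀ i : ℕ, i ≤ m → (p + (i : ZMod n)) ∈ C := fun i hi => hmem i (by omega)
    have hw : (p + ((m : ℕ) : ZMod n)) ∈ C := hmem m (by omega)
    have hreach := ih hmem' u ⟨_, hw⟩ hu rfl
    have hstep : H.Adj (p + ((m : ℕ) : ZMod n)) (p + ((m : ℕ) : ZMod n) + 1) := by
      apply hadj _ hw
      have : p + ((m : ℕ) : ZMod n) + 1 = p + (((m+1 : ℕ)) : ZMod n) := by push_cast; ring
      rw [this]; exact hmem (m+1) le_rfl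
    have hv' : v.val = p + ((m : ℕ) : ZMod n) + 1 := by rw [hv]; push_cast; ring
    have hadj2 : (H.induce C).Adj ⟨_, hw⟩ v := by
      have h9 : H.Adj (p + ((m : ℕ) : ZMod n)) v.val := by rw [hv']; exact hstep
      exact h9
    exact hreach.trans hadj2.reachable

/-- reach between two points of a clockwise arc `(x,y)` all of which lies in `C`. -/
lemma reach_btw_arc {H : SimpleGraph (ZMod n)} {C : Set (ZMod n)}
    (hadj : ∀ w : ZMod n, w ∈ C → (w + 1) ∈ C → H.Adj w (w + 1)) (x y : ZMod n)
    (harc : ∀ w, Btw x w y → w ∈ C) (u v : ↥C) (hu : Btw x u.val y) (hv : Btw x v.val y) :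
    (H.induce C).Reachable u v := by
  -- wlog via an auxiliary claim
  have aux : ∀ (u v : ↥C), Btw x u.val y → Btw x v.val y → rho x u.val ≤ rho x v.val →
      (H.induce C).Reachable u v := by
    intro u v hu hv hle
    obtain ⟨ru, hru⟩ : ∃ r, rho x u.val = r := ⟨_, rfl⟩
    obtain ⟨rv, hrv⟩ : ∃ r, rho x v.val = r := ⟨_, rfl⟩
    have h1 : u.val = x + (ru : ZMod n) := by rw [← hru]; exact eq_add_rho x u.val
    have h2 : v.val = x + (rv : ZMod n) := by rw [← hrv]; exact eq_add_rho x v.val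
    have hrvn : rv < n := by rw [← hrv]; exact rho_lt x v.val
    rw [hru, hrv] at hle
    have hu1 : 0 < ru := by rw [← hru]; exact hu.1
    have hu2 : ru < rho x y := by rw [← hru]; exact hu.2
    have hv2 : rv < rho x y := by rw [← hrv]; exact hv.2
    apply chain_reach hadj u.val (rv - ru) _ u v rfl
    · -- v.val = u.val + (rv - ru)
      rw [h2, h1]
      have h8 : (rv : ZMod n) = (ru : ZMod n) + ((rv - ru : ℕ) : ZMod n) := by
        rw [← Nat.cast_add]
        congr 1
        omega
      rw [h8]; ring
    · -- membership of intermediate points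
      intro i hi
      apply harc
      have hpt : u.val + (i : ZMod n) = x + ((ru + i : ℕ) : ZMod n) := by
        rw [h1]; push_cast; ring
      rw [hpt]
      have hlt : ru + i < n := by omega
      have h7 : rho x (x + ((ru + i : ℕ) : ZMod n)) = ru + i := rho_add_nat x hlt
      constructor
      · rw [h7]; omega
      · rw [h7]; omega
  rcases le_total (rho x u.val) (rho x v.val) with h | h
  · exact aux u v hu hv h
  · exact (aux v u hv hu h).symm

end Stmt15

namespace Stmt15
open SimpleGraph

variable {n : ℕ} [NeZero n]

lemma sym2_rep {α : Type*} (z : Sym2 α) : ∃ x y, z = s(x, y) :=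
  Sym2.ind (fun x y => ⟨x, y, rfl⟩) z

lemma one_ne_zero' (hn : 4 ≤ n) : (1 : ZMod n) ≠ 0 := by
  intro h
  have h1 : ((1:ℕ) : ZMod n).val = 1 := ZMod.val_cast_of_lt (by omega)
  rw [Nat.cast_one, h, ZMod.val_zero] at h1
  omega

lemma rho_add_one (hn : 4 ≤ n) (x : ZMod n) : rho x (x + 1) = 1 := by
  have := rho_add_nat x (show 1 < n by omega)
  rwa [Nat.cast_one] at this

lemma ne_add_one (hn : 4 ≤ n) (x : ZMod n) : x + 1 ≠ x := by
  intro h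
  have h2 : (1 : ZMod n) = 0 := by
    have := congrArg (fun t => t - x) h
    simpa using this
  exact one_ne_zero' hn h2

lemma btw_asymm (hn : 4 ≤ n) {x y w : ZMod n} (hxy : y ≠ x) :
    ¬ (Btw x w y ∧ Btw y w x) := by
  rintro ⟨⟨h1, h2⟩, ⟨h3, h4⟩⟩
  have hwx : w ≠ x := by intro h; rw [h, rho_self] at h1; omega
  have hwy : w ≠ y := by intro h; rw [h, rho_self] at h3; omega
  have e1 : rho w y = rho x y - rho x w := rho_sub (le_of_lt h2)
  have e2 : rho y w + rho w y = n := by rw [Nat.add_comm]; exact rho_rev hwy.symm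
  have e3 : rho x y + rho y x = n := rho_rev hxy
  have e4 : 0 < rho w y := by
    have : y ≠ w := hwy.symm
    rw [e1]
    have := rho_pos_of_ne (show y ≠ x from hxy)
    omega
  omega

lemma bp_adj_step (hn : 4 ≤ n) (B' : Finset (Sym2 (ZMod n))) (w : ZMod n) :
    (bpGraph n B').Adj w (w + 1) := by
  rw [bpGraph, SimpleGraph.fromEdgeSet_adj]
  exact ⟨Or.inr ⟨w, rfl⟩, (ne_add_one hn w).symm⟩

lemma bpdel_adj_step (hn : 4 ≤ n) {e : Sym2 (ZMod n)} (hbd : ¬ IsBoundaryEdge n e)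
    (B' : Finset (Sym2 (ZMod n))) (w : ZMod n) :
    ((bpGraph n B').deleteEdges {e}).Adj w (w + 1) := by
  rw [SimpleGraph.deleteEdges_adj]
  refine ⟨bp_adj_step hn B' w, ?_⟩
  intro hmem
  rw [Set.mem_singleton_iff] at hmem
  exact hbd ⟨w, hmem.symm⟩

lemma bp_adj_of_brace {B' : Finset (Sym2 (ZMod n))} {a b : ZMod n}
    (h : s(a, b) ∈ B') (hab : a ≠ b) : (bpGraph n B').Adj a b := by
  rw [bpGraph, SimpleGraph.fromEdgeSet_adj]
  exact ⟨Or.inl h, hab⟩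

/-- deleting a non-boundary edge and two *adjacent* vertices keeps the braced
polygon connected -/
lemma del_connected_adjacent (hn : 4 ≤ n) {e : Sym2 (ZMod n)} (hbd : ¬ IsBoundaryEdge n e)
    (B' : Finset (Sym2 (ZMod n))) (x : ZMod n) :
    (((bpGraph n B').deleteEdges {e}).induce ({v : ZMod n | v = x ∨ v = x + 1}ᶜ)).Connected := by
  set C : Set (ZMod n) := {v : ZMod n | v = x ∨ v = x + 1}ᶜ with hC
  have hadj : ∀ w : ZMod n, w ∈ C → (w + 1) ∈ C →
      ((bpGraph n B').deleteEdges {e}).Adj w (w + 1) := fun w _ _ => bpdel_adj_step hn hbd B' w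
  have hmemC : ∀ v : ZMod n, v ∈ C ↔ (v ≠ x ∧ v ≠ x + 1) := by
    intro v
    simp [hC]
  -- anchor x+2
  have h2n : 2 < n := by omega
  have hz : (x + ((2:ℕ) : ZMod n)) ∈ C := by
    rw [hmemC]
    constructor
    · intro h
      have := rho_add_nat x h2n
      rw [h, rho_self] at this; omega
    · intro h
      have h5 := rho_add_nat x h2n
      rw [h] at h5
      have h6 : rho x (x+1) = 1 := rho_add_one hn x
      omega
  apply connected_of_anchor ⟨_, hz⟩
  intro w
  -- w.val has coordinate 2 ≤ r < n relative to x
  have hw := (hmemC w.val).mp w.2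
  have hr1 : 0 < rho x w.val := rho_pos_of_ne (by exact hw.1)
  have hr2 : rho x w.val ≠ 1 := by
    intro h
    apply hw.2
    have := eq_add_rho x w.val
    rw [h, Nat.cast_one] at this
    exact this
  -- chain from x+2 to w
  obtain ⟨r, hr⟩ : ∃ r, rho x w.val = r := ⟨_, rfl⟩
  rw [hr] at hr1 hr2
  have hrn : r < n := by rw [← hr]; exact rho_lt x w.val
  apply SimpleGraph.Reachable.symm
  apply chain_reach hadj (x + ((2:ℕ) : ZMod n)) (r - 2) _ _ _ rfl
  · -- w.val = (x+2) + (r - 2)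
    have h1 : w.val = x + (r : ZMod n) := by rw [← hr]; exact eq_add_rho x w.val
    rw [h1]
    have : (r : ZMod n) = ((2:ℕ) : ZMod n) + ((r - 2 : ℕ) : ZMod n) := by
      rw [← Nat.cast_add]; congr 1; omega
    rw [this]; ring
  · intro i hi
    have hlt : 2 + i < n := by omega
    have hpt : (x + ((2:ℕ) : ZMod n)) + (i : ZMod n) = x + ((2 + i : ℕ) : ZMod n) := by
      push_cast; ring
    rw [hpt, hmemC]
    have h7 : rho x (x + ((2 + i : ℕ) : ZMod n)) = 2 + i := rho_add_nat x hlt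
    constructor
    · intro h; rw [h, rho_self] at h7; omega
    · intro h
      have h6 : rho x (x + 1) = 1 := rho_add_one hn x
      rw [h] at h7; omega

end Stmt15

namespace Stmt15
open SimpleGraph

variable {n : ℕ} [NeZero n]

/-- **Claim C**: for each brace `e` with dual chord `d e = {x,y}`, the brace `e`
crosses the chord, and no other brace crosses it. -/
lemma claimC {B : Finset (Sym2 (ZMod n))} {d : Sym2 (ZMod n) → Sym2 (ZMod n)}
    (hn : 4 ≤ n)
    (hB : ∀ e ∈ B, ¬ e.IsDiag ∧ ¬ IsBoundaryEdge n e)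
    (hmin1 : ∀ s : Finset (ZMod n), s.card ≤ 2 →
      ((bpGraph n B).induce ((↑s : Set (ZMod n))ᶜ)).Connected)
    (hdnd : ∀ e ∈ B, ¬ (d e).IsDiag)
    (hdual : ∀ e ∈ B, ¬ (((bpGraph n B).deleteEdges {e}).induce
        ({v : ZMod n | v ∈ d e}ᶜ)).Connected)
    {e : Sym2 (ZMod n)} (he : e ∈ B) :
    ∃ x y a b : ZMod n, d e = s(x, y) ∧ e = s(a, b) ∧ Btw x a y ∧ Btw y b x ∧
      (∀ e' ∈ B, e' ≠ e → ∀ a' b' : ZMod n, e' = s(a', b') →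
        ¬ (Btw x a' y ∧ Btw y b' x)) := by
  obtain ⟨x, y, hrep⟩ := sym2_rep (d e)
  have hxy : x ≠ y := by
    intro h
    exact hdnd e he (by rw [hrep, h]; exact Sym2.mk_isDiag_iff.mpr rfl)
  set C : Set (ZMod n) := {v : ZMod n | v ∈ d e}ᶜ with hCdef
  have hmemC : ∀ v : ZMod n, v ∈ C ↔ (v ≠ x ∧ v ≠ y) := by
    intro v
    rw [hCdef]
    simp only [Set.mem_compl_iff, Set.mem_setOf_eq, hrep, Sym2.mem_iff]
    tauto
  have hdis := hdual e he
  rw [← hCdef] at hdis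
  have hbd : ¬ IsBoundaryEdge n e := (hB e he).2
  set Ge := (bpGraph n B).deleteEdges {e} with hGe
  have hadj : ∀ w : ZMod n, w ∈ C → (w + 1) ∈ C → Ge.Adj w (w + 1) :=
    fun w _ _ => bpdel_adj_step hn hbd B w
  -- both arcs are nonempty
  have harcs : 2 ≤ rho x y ∧ 2 ≤ rho y x := by
    constructor
    · by_contra h
      push_neg at h
      have h1 : rho x y = 1 := by
        have := rho_pos_of_ne (show y ≠ x from fun hh => hxy hh.symm)
        omega
      have hy : y = x + 1 := by
        have := eq_add_rho x y
        rw [h1, Nat.cast_one] at this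
        exact this
      apply hdis
      have hCeq : C = {v : ZMod n | v = x ∨ v = x + 1}ᶜ := by
        ext v
        rw [hmemC]
        simp [hy]
      rw [hCeq]
      exact del_connected_adjacent hn hbd B x
    · by_contra h
      push_neg at h
      have h1 : rho y x = 1 := by
        have := rho_pos_of_ne hxy
        omega
      have hy : x = y + 1 := by
        have := eq_add_rho y x
        rw [h1, Nat.cast_one] at this
        exact this
      apply hdis
      have hCeq : C = {v : ZMod n | v = y ∨ v = y + 1}ᶜ := by
        ext v
        rw [hmemC]
        simp [hy]
        tauto
      rw [hCeq]
      exact del_connected_adjacent hn hbd B y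
  -- anchors
  have hrho1 : rho x (x+1) = 1 := rho_add_one hn x
  have hrho1' : rho y (y+1) = 1 := rho_add_one hn y
  have hp0btw : Btw x (x+1) y := ⟨by omega, by omega⟩
  have hq0btw : Btw y (y+1) x := ⟨by omega, by omega⟩
  have hp0 : (x + 1) ∈ C := (hmemC _).mpr ⟨(hp0btw).ne_left, (hp0btw).ne_right⟩
  have hq0 : (y + 1) ∈ C := (hmemC _).mpr ⟨(hq0btw).ne_right, (hq0btw).ne_left⟩
  set p₀ : ↥C := ⟨x + 1, hp0⟩
  set q₀ : ↥C := ⟨y + 1, hq0⟩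
  have harc1 : ∀ w, Btw x w y → w ∈ C := fun w hw => (hmemC w).mpr ⟨hw.ne_left, hw.ne_right⟩
  have harc2 : ∀ w, Btw y w x → w ∈ C := fun w hw => (hmemC w).mpr ⟨hw.ne_right, hw.ne_left⟩
  -- reach within arcs
  have reach1 : ∀ w : ↥C, Btw x w.val y → (Ge.induce C).Reachable p₀ w :=
    fun w hw => reach_btw_arc hadj x y harc1 p₀ w hp0btw hw
  have reach2 : ∀ w : ↥C, Btw y w.val x → (Ge.induce C).Reachable q₀ w :=
    fun w hw => reach_btw_arc hadj y x harc2 q₀ w hq0btw hw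
  -- not reachable p₀ q₀
  have hnreach : ¬ (Ge.induce C).Reachable p₀ q₀ := by
    intro hr
    apply hdis
    apply connected_of_anchor p₀
    intro w
    have hw := (hmemC w.val).mp w.2
    rcases btw_trichotomy x y w.val (fun h => hxy h.symm) with h | h | h | h
    · exact absurd h hw.1
    · exact absurd h hw.2
    · exact (reach1 w h).symm
    · exact ((reach2 w h).symm).trans hr.symm
  -- connectivity of G minus {x,y}
  have hconn : ((bpGraph n B).induce C).Connected := by
    have h2 := hmin1 {x, y} (by
      apply le_trans (Finset.card_insert_le _ _)
      simp)
    have hCeq : (↑({x, y} : Finset (ZMod n)) : Set (ZMod n))ᶜ = C := by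
      ext v
      rw [hmemC]
      simp
    rwa [hCeq] at h2
  obtain ⟨wk⟩ := hconn.preconnected p₀ q₀
  have hswitch := walk_switch (fun c => (Ge.induce C).Reachable p₀ c) wk
    (SimpleGraph.Reachable.refl _) hnreach
  obtain ⟨A, Bv, hadjAB, hA, hBv⟩ := hswitch
  -- the switching edge must be e
  have hedge : e = s(A.val, Bv.val) := by
    by_contra hne
    apply hBv
    have : Ge.Adj A.val Bv.val := by
      rw [hGe, SimpleGraph.deleteEdges_adj]
      exact ⟨hadjAB, by rw [Set.mem_singleton_iff]; exact fun h => hne h.symm⟩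
    exact hA.trans (SimpleGraph.Adj.reachable (by exact this : (Ge.induce C).Adj A Bv))
  -- positions of the endpoints
  have hApos : Btw x A.val y := by
    have hw := (hmemC A.val).mp A.2
    rcases btw_trichotomy x y A.val (fun h => hxy h.symm) with h | h | h | h
    · exact absurd h hw.1
    · exact absurd h hw.2
    · exact h
    · exact absurd ((reach2 A h).symm.symm.trans hA.symm).symm hnreach
  have hBpos : Btw y Bv.val x := by
    have hw := (hmemC Bv.val).mp Bv.2
    rcases btw_trichotomy x y Bv.val (fun h => hxy h.symm) with h | h | h | h
    · exact absurd h hw.1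
    · exact absurd h hw.2
    · exact absurd (reach1 Bv h) hBv
    · exact h
  refine ⟨x, y, A.val, Bv.val, hrep, hedge, hApos, hBpos, ?_⟩
  -- no other brace crosses the chord
  intro e' he' hne a' b' hrep' ⟨h1', h2'⟩
  have ha'C : a' ∈ C := harc1 a' h1'
  have hb'C : b' ∈ C := harc2 b' h2'
  have hab' : a' ≠ b' := by
    intro h
    exact btw_asymm hn (fun hh => hxy hh.symm) ⟨h1', h ▸ h2'⟩
  have hGadj : (bpGraph n B).Adj a' b' := bp_adj_of_brace (hrep' ▸ he') hab'
  have hGeadj : Ge.Adj a' b' := by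
    rw [hGe, SimpleGraph.deleteEdges_adj]
    refine ⟨hGadj, ?_⟩
    rw [Set.mem_singleton_iff]
    intro h
    exact hne (hrep'.trans h)
  have : (Ge.induce C).Reachable ⟨a', ha'C⟩ ⟨b', hb'C⟩ :=
    SimpleGraph.Adj.reachable (by exact hGeadj)
  exact hnreach ((reach1 ⟨a', ha'C⟩ h1').trans (this.trans (reach2 ⟨b', hb'C⟩ h2').symm))

end Stmt15

namespace Stmt15
open SimpleGraph
open scoped Classical

variable {n : ℕ} [NeZero n]

lemma mem_seg_iff (a : ZMod n) (m : ℕ) (hm : m < n) (v : ZMod n) :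
    v ∈ (Finset.range (m+1)).image (fun i : ℕ => a + (i : ZMod n)) ↔ rho a v ≤ m := by
  constructor
  · rintro hv
    rw [Finset.mem_image] at hv
    obtain ⟨i, hi, rfl⟩ := hv
    rw [Finset.mem_range] at hi
    rw [rho_add_nat a (by omega)]
    omega
  · intro hv
    rw [Finset.mem_image]
    exact ⟨rho a v, Finset.mem_range.mpr (by omega), (eq_add_rho a v).symm⟩

lemma seg_card (a : ZMod n) (m : ℕ) (hm : m < n) :
    ((Finset.range (m+1)).image (fun i : ℕ => a + (i : ZMod n))).card = m + 1 := by
  rw [Finset.card_image_of_injOn, Finset.card_range]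
  intro i hi j hj hij
  rw [Finset.mem_coe, Finset.mem_range] at hi hj
  have h1 : rho a (a + (i : ZMod n)) = i := rho_add_nat a (by omega)
  have h2 : rho a (a + (j : ZMod n)) = j := rho_add_nat a (by omega)
  have hij' : a + (i : ZMod n) = a + (j : ZMod n) := hij
  rw [← h1, ← h2, hij']

lemma two_ne_zero' (hn : 4 ≤ n) : ((2:ℕ) : ZMod n) ≠ 0 := by
  intro h
  have h1 : ((2:ℕ) : ZMod n).val = 2 := ZMod.val_cast_of_lt (by omega)
  rw [h, ZMod.val_zero] at h1
  omega

/-- The number of braces lying inside a segment of `m+1` consecutive vertices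
is at most `m-1`. -/
lemma braces_in_seg {B : Finset (Sym2 (ZMod n))}
    (hn : 4 ≤ n)
    (hB : ∀ e ∈ B, ¬ e.IsDiag ∧ ¬ IsBoundaryEdge n e)
    (hcircuit : ∀ s : Finset (ZMod n), 2 ≤ s.card → s.card < n →
      {e ∈ (bpGraph n B).edgeSet | ∀ v ∈ e, v ∈ s}.ncard ≤ 2 * s.card - 3)
    (a : ZMod n) (m : ℕ) (hm1 : 1 ≤ m) (hm2 : m + 2 ≤ n) :
    (B.filter (fun e => ∀ w ∈ e, rho a w ≤ m)).card ≤ m - 1 := by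
  set s : Finset (ZMod n) := (Finset.range (m+1)).image (fun i : ℕ => a + (i : ZMod n)) with hs
  have hcard : s.card = m + 1 := seg_card a m (by omega)
  have hnc := hcircuit s (by rw [hcard]; omega) (by rw [hcard]; omega)
  rw [hcard] at hnc
  -- the boundary edges inside the segment
  set Fb : Finset (Sym2 (ZMod n)) :=
    (Finset.range m).image (fun i : ℕ => s(a + (i : ZMod n), a + (i : ZMod n) + 1)) with hFb
  have hFbcard : Fb.card = m := by
    rw [hFb, Finset.card_image_of_injOn, Finset.card_range]
    intro i hi j hj hij
    rw [Finset.mem_coe, Finset.mem_range] at hi hj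
    have hij' : s(a + (i : ZMod n), a + (i : ZMod n) + 1) = s(a + (j : ZMod n), a + (j : ZMod n) + 1) := hij
    rw [Sym2.eq_iff] at hij'
    rcases hij' with ⟨h1, _⟩ | ⟨h1, h2⟩
    · have e1 : rho a (a + (i : ZMod n)) = i := rho_add_nat a (by omega)
      have e2 : rho a (a + (j : ZMod n)) = j := rho_add_nat a (by omega)
      rw [← e1, ← e2, h1]
    · exfalso
      have h3 : a + (j : ZMod n) + ((2:ℕ) : ZMod n) = a + (j : ZMod n) := by
        have h5 : a + (j : ZMod n) + ((2:ℕ) : ZMod n) = (a + (j : ZMod n) + 1) + 1 := by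
          push_cast; ring
        rw [h5, ← h1, h2]
      exact two_ne_zero' hn (add_eq_left.mp h3)
  set Fbr : Finset (Sym2 (ZMod n)) := B.filter (fun e => ∀ w ∈ e, rho a w ≤ m) with hFbr
  have hdisj : Disjoint Fb Fbr := by
    rw [Finset.disjoint_left]
    intro e heb hebr
    rw [hFb, Finset.mem_image] at heb
    obtain ⟨i, _, rfl⟩ := heb
    rw [hFbr, Finset.mem_filter] at hebr
    exact (hB _ hebr.1).2 ⟨a + (i : ZMod n), rfl⟩
  -- both live inside the circuit-counted set
  have hsub : (↑(Fb ∪ Fbr) : Set (Sym2 (ZMod n))) ⊆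
      {e ∈ (bpGraph n B).edgeSet | ∀ v ∈ e, v ∈ s} := by
    intro e heu
    rw [Finset.coe_union, Set.mem_union] at heu
    rcases heu with heb | hebr
    · rw [Finset.mem_coe, hFb, Finset.mem_image] at heb
      obtain ⟨i, hi, rfl⟩ := heb
      rw [Finset.mem_range] at hi
      constructor
      · rw [bpGraph, SimpleGraph.edgeSet_fromEdgeSet]
        constructor
        · exact Or.inr ⟨a + (i : ZMod n), rfl⟩
        · rw [Sym2.mem_diagSet, Sym2.mk_isDiag_iff]
          exact (ne_add_one hn _).symm
      · intro v hv
        rw [Sym2.mem_iff] at hv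
        rw [hs, mem_seg_iff a m (by omega)]
        rcases hv with rfl | rfl
        · rw [rho_add_nat a (by omega)]; omega
        · have : a + (i : ZMod n) + 1 = a + ((i + 1 : ℕ) : ZMod n) := by push_cast; ring
          rw [this, rho_add_nat a (by omega)]; omega
    · rw [Finset.mem_coe, hFbr, Finset.mem_filter] at hebr
      constructor
      · rw [bpGraph, SimpleGraph.edgeSet_fromEdgeSet]
        exact ⟨Or.inl hebr.1, (hB _ hebr.1).1⟩
      · intro v hv
        rw [hs, mem_seg_iff a m (by omega)]
        exact hebr.2 v hv
  have hfin : {e ∈ (bpGraph n B).edgeSet | ∀ v ∈ e, v ∈ s}.Finite := Set.toFinite _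
  have hle : (Fb ∪ Fbr).card ≤ 2 * (m + 1) - 3 := by
    calc (Fb ∪ Fbr).card = (↑(Fb ∪ Fbr) : Set (Sym2 (ZMod n))).ncard :=
          (Set.ncard_coe_finset _).symm
    _ ≤ {e ∈ (bpGraph n B).edgeSet | ∀ v ∈ e, v ∈ s}.ncard := Set.ncard_le_ncard hsub hfin
    _ ≤ 2 * (m + 1) - 3 := hnc
  rw [Finset.card_union_of_disjoint hdisj, hFbcard] at hle
  omega

end Stmt15

namespace Stmt15
open SimpleGraph
open scoped Classical

variable {n : ℕ} [NeZero n]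

/-- normalized claim C: coordinates relative to a segment base `a`. -/
lemma keyC {B : Finset (Sym2 (ZMod n))} {d : Sym2 (ZMod n) → Sym2 (ZMod n)}
    (hn : 4 ≤ n)
    (hB : ∀ e ∈ B, ¬ e.IsDiag ∧ ¬ IsBoundaryEdge n e)
    (hmin1 : ∀ s : Finset (ZMod n), s.card ≤ 2 →
      ((bpGraph n B).induce ((↑s : Set (ZMod n))ᶜ)).Connected)
    (hdnd : ∀ e ∈ B, ¬ (d e).IsDiag)
    (hdual : ∀ e ∈ B, ¬ (((bpGraph n B).deleteEdges {e}).induce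
        ({v : ZMod n | v ∈ d e}ᶜ)).Connected)
    (a : ZMod n) (m : ℕ) (hmn : m + 2 ≤ n)
    {e : Sym2 (ZMod n)} (he : e ∈ B) (hseg : ∀ w ∈ d e, rho a w ≤ m) :
    ∃ (i j : ℕ) (x y u v : ZMod n),
      i < j ∧ j ≤ m ∧ x = a + (i : ZMod n) ∧ y = a + (j : ZMod n) ∧
      d e = s(x, y) ∧ e = s(u, v) ∧ Btw x u y ∧ Btw y v x ∧
      i < rho a u ∧ rho a u < j ∧
      (∀ e' ∈ B, e' ≠ e → ∀ a' b' : ZMod n, e' = s(a', b') →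
        ¬ (Btw x a' y ∧ Btw y b' x)) := by
  obtain ⟨x0, y0, u0, v0, hrep, herep, hb1, hb2, hC3⟩ := claimC hn hB hmin1 hdnd hdual he
  have hx0m : rho a x0 ≤ m := hseg x0 (by rw [hrep]; exact Sym2.mem_iff.mpr (Or.inl rfl))
  have hy0m : rho a y0 ≤ m := hseg y0 (by rw [hrep]; exact Sym2.mem_iff.mpr (Or.inr rfl))
  have hne : rho a x0 ≠ rho a y0 := by
    intro h
    have : x0 = y0 := rho_inj h
    have h1 := hb1.1
    have h2 := hb1.2
    rw [← this, rho_self] at h2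
    omega
  have hx0eq := eq_add_rho a x0
  have hy0eq := eq_add_rho a y0
  rcases Nat.lt_or_ge (rho a x0) (rho a y0) with hlt | hge
  · obtain ⟨hc, _, _⟩ := coords_of_btw hx0eq hy0eq hlt (by omega : rho a y0 < n) hb1
    exact ⟨rho a x0, rho a y0, x0, y0, u0, v0, hlt, hy0m, hx0eq, hy0eq, hrep, herep,
      hb1, hb2, by omega, by omega, hC3⟩
  · have hlt : rho a y0 < rho a x0 := by omega
    obtain ⟨hc, _, _⟩ := coords_of_btw hy0eq hx0eq hlt (by omega : rho a x0 < n) hb2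
    refine ⟨rho a y0, rho a x0, y0, x0, v0, u0, hlt, hx0m, hy0eq, hx0eq,
      hrep.trans Sym2.eq_swap, herep.trans Sym2.eq_swap, hb2, hb1, by omega, by omega, ?_⟩
    intro e' he' hne' a' b' hrep' hcross
    exact hC3 e' he' hne' b' a' (hrep'.trans Sym2.eq_swap) ⟨hcross.2, hcross.1⟩

/-- **Claim D**: any segment of `m+1` consecutive vertices contains at most
`m-1` dual braces. -/
lemma claimD {B : Finset (Sym2 (ZMod n))} {d : Sym2 (ZMod n) → Sym2 (ZMod n)}
    (hn : 4 ≤ n)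
    (hB : ∀ e ∈ B, ¬ e.IsDiag ∧ ¬ IsBoundaryEdge n e)
    (hcircuit : ∀ s : Finset (ZMod n), 2 ≤ s.card → s.card < n →
      {e ∈ (bpGraph n B).edgeSet | ∀ v ∈ e, v ∈ s}.ncard ≤ 2 * s.card - 3)
    (hmin1 : ∀ s : Finset (ZMod n), s.card ≤ 2 →
      ((bpGraph n B).induce ((↑s : Set (ZMod n))ᶜ)).Connected)
    (hdnd : ∀ e ∈ B, ¬ (d e).IsDiag)
    (hdual : ∀ e ∈ B, ¬ (((bpGraph n B).deleteEdges {e}).induce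
        ({v : ZMod n | v ∈ d e}ᶜ)).Connected) :
    ∀ m : ℕ, ∀ a : ZMod n, 1 ≤ m → m + 2 ≤ n →
      (B.filter (fun e => ∀ w ∈ d e, rho a w ≤ m)).card ≤ m - 1 := by
  intro m
  induction m using Nat.strong_induction_on with
  | _ m ih =>
  intro a hm1 hm2
  set F := B.filter (fun e => ∀ w ∈ d e, rho a w ≤ m) with hF
  by_cases hexit : ∃ e ∈ F, ∃ w ∈ e, m < rho a w
  · -- case 1: some dual brace in the segment has an exiting brace
    obtain ⟨e₀, he₀F, w₀, hw₀e, hw₀⟩ := hexit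
    have he₀B : e₀ ∈ B := (Finset.mem_filter.mp he₀F).1
    have he₀seg : ∀ w ∈ d e₀, rho a w ≤ m := (Finset.mem_filter.mp he₀F).2
    obtain ⟨i₀, j₀, x₀, y₀, u₀, v₀, hij₀, hj₀m, hx₀, hy₀, hrep₀, herep₀, hbu₀, hbv₀,
      hr1, hr2, _⟩ := keyC hn hB hmin1 hdnd hdual a m hm2 he₀B he₀seg
    -- the exit endpoint is v₀
    have hv₀out : m < rho a v₀ := by
      rw [herep₀, Sym2.mem_iff] at hw₀e
      rcases hw₀e with rfl | rfl
      · omega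
      · exact hw₀
    set r := rho a u₀ with hr
    have hu₀eq : u₀ = a + (r : ZMod n) := eq_add_rho a u₀
    -- split the segment at u₀
    set F1 := B.filter (fun e => ∀ w ∈ d e, rho a w ≤ r) with hF1
    set F2 := B.filter (fun e => ∀ w ∈ d e, rho u₀ w ≤ m - r) with hF2
    have hsub : F ⊆ insert e₀ (F1 ∪ F2) := by
      intro e heF
      rw [Finset.mem_insert]
      by_cases hee : e = e₀
      · exact Or.inl hee
      right
      rw [Finset.mem_union]
      have heB : e ∈ B := (Finset.mem_filter.mp heF).1
      have heseg : ∀ w ∈ d e, rho a w ≤ m := (Finset.mem_filter.mp heF).2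
      obtain ⟨i, j, x, y, u, v, hij, hjm, hx, hy, hrep, herep, hbu, hbv,
        hs1, hs2, hC3⟩ := keyC hn hB hmin1 hdnd hdual a m hm2 heB heseg
      -- e's chord does not straddle u₀
      have hnostraddle : ¬ (i < r ∧ r < j) := by
        rintro ⟨hir, hrj⟩
        -- e₀ crosses e's chord: contradiction with C3 of e
        apply hC3 e₀ he₀B (fun h => hee h.symm) u₀ v₀ herep₀
        constructor
        · rw [hx, hy, hu₀eq]
          exact btw_of_coords hir hrj (by omega)
        · -- v₀ is beyond the segment
          have hvx : v₀ ≠ x := by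
            intro h
            rw [h, hx, rho_add_nat a (by omega : i < n)] at hv₀out
            omega
          have hvy : v₀ ≠ y := by
            intro h
            rw [h, hy, rho_add_nat a (by omega : j < n)] at hv₀out
            omega
          have hyx : y ≠ x := by
            intro h
            have : rho a y = rho a x := by rw [h]
            rw [hx, hy, rho_add_nat a (by omega : i < n),
              rho_add_nat a (by omega : j < n)] at this
            omega
          rcases btw_trichotomy x y v₀ hyx with h | h | h | h
          · exact absurd h hvx
          · exact absurd h hvy
          · exfalso
            obtain ⟨_, _, hlt⟩ := coords_of_btw hx hy hij (by omega) h
            omega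
          · exact h
      rcases Nat.lt_or_ge r j with h1 | h1
      · -- then j ≤ r is false, so r ≤ i must fail...
        have h2 : r ≤ i := by omega
        -- e goes to F2
        right
        rw [hF2, Finset.mem_filter]
        refine ⟨heB, ?_⟩
        intro w hw
        rw [hrep, Sym2.mem_iff] at hw
        have key : ∀ (k : ℕ), k ≤ m → r ≤ k → rho u₀ (a + (k : ZMod n)) ≤ m - r := by
          intro k hkm hrk
          have e1 : rho a (a + (k : ZMod n)) = k := rho_add_nat a (by omega)
          have e2 : rho a u₀ = r := hr.symm
          have := rho_sub (by omega : rho a u₀ ≤ rho a (a + (k : ZMod n)))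
          rw [e1, e2] at this
          rw [this]
          omega
        rcases hw with rfl | rfl
        · rw [hx]; exact key i (by omega) h2
        · rw [hy]; exact key j (by omega) (by omega)
      · -- j ≤ r : e goes to F1
        left
        rw [hF1, Finset.mem_filter]
        refine ⟨heB, ?_⟩
        intro w hw
        rw [hrep, Sym2.mem_iff] at hw
        rcases hw with rfl | rfl
        · rw [hx, rho_add_nat a (by omega : i < n)]; omega
        · rw [hy, rho_add_nat a (by omega : j < n)]; omega
    -- count
    have hb1 : F1.card ≤ r - 1 := ih r (by omega) a (by omega) (by omega)
    have hb2 : F2.card ≤ (m - r) - 1 := ih (m - r) (by omega) u₀ (by omega) (by omega)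
    calc F.card ≤ (insert e₀ (F1 ∪ F2)).card := Finset.card_le_card hsub
      _ ≤ (F1 ∪ F2).card + 1 := Finset.card_insert_le _ _
      _ ≤ (F1.card + F2.card) + 1 := by
          have := Finset.card_union_le F1 F2
          omega
      _ ≤ m - 1 := by omega
  · -- case 2: all braces with dual inside the segment lie inside the segment
    push_neg at hexit
    have hsub : F ⊆ B.filter (fun e => ∀ w ∈ e, rho a w ≤ m) := by
      intro e heF
      rw [Finset.mem_filter]
      exact ⟨(Finset.mem_filter.mp heF).1, fun w hw => hexit e heF w hw⟩
    exact le_trans (Finset.card_le_card hsub) (braces_in_seg hn hB hcircuit a m hm1 hm2)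

end Stmt15

namespace Stmt15
open SimpleGraph
open scoped Classical

variable {n : ℕ} [NeZero n]

lemma rho_add_of_lt {u v w : ZMod n} (h : rho u v + rho v w < n) :
    rho u w = rho u v + rho v w := by
  obtain ⟨p, hp⟩ : ∃ p, rho u v = p := ⟨_, rfl⟩
  obtain ⟨q, hq⟩ : ∃ q, rho v w = q := ⟨_, rfl⟩
  rw [hp, hq] at h ⊢
  have h1 : v = u + (p : ZMod n) := by rw [← hp]; exact eq_add_rho u v
  have h2 : w = v + (q : ZMod n) := by rw [← hq]; exact eq_add_rho v w
  have h3 : w = u + ((p + q : ℕ) : ZMod n) := by rw [h2, h1]; push_cast; ring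
  rw [h3]; exact rho_add_nat u h

lemma rho_succ {u w : ZMod n} (h : rho u w + 1 < n) : rho u (w + 1) = rho u w + 1 := by
  obtain ⟨p, hp⟩ : ∃ p, rho u w = p := ⟨_, rfl⟩
  rw [hp] at h ⊢
  have h1 : w = u + (p : ZMod n) := by rw [← hp]; exact eq_add_rho u w
  have h3 : w + 1 = u + ((p + 1 : ℕ) : ZMod n) := by rw [h1]; push_cast; ring
  rw [h3]; exact rho_add_nat u h

lemma anchor_seg_connected (hn : 4 ≤ n) (B' : Finset (Sym2 (ZMod n))) (C : Set (ZMod n))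
    (z : ZMod n) (hz : z ∈ C)
    (hC : ∀ w, w ∈ C → ∀ i : ℕ, i ≤ rho z w → (z + (i : ℕ) : ZMod n) ∈ C) :
    ((bpGraph n B').induce C).Connected := by
  apply connected_of_anchor (⟨z, hz⟩ : ↥C)
  intro w
  apply SimpleGraph.Reachable.symm
  exact chain_reach (fun t _ _ => bp_adj_step hn B' t) z (rho z w.val)
    (fun i hi => hC w.val w.2 i hi) ⟨z, hz⟩ w rfl (eq_add_rho z w.val)

/-- removing at most one vertex, or two adjacent ones, keeps any braced polygon
connected -/
lemma conn_case_adjacent (hn : 4 ≤ n) (B' : Finset (Sym2 (ZMod n))) (u : ZMod n) :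
    ((bpGraph n B').induce ({w : ZMod n | w = u ∨ w = u + 1}ᶜ)).Connected := by
  set C : Set (ZMod n) := {w : ZMod n | w = u ∨ w = u + 1}ᶜ with hCdef
  have hmemC : ∀ w : ZMod n, w ∈ C ↔ (w ≠ u ∧ w ≠ u + 1) := by
    intro w; rw [hCdef]; simp
  have h1 : rho u (u + 1) = 1 := rho_add_one hn u
  have hzmem : (u + ((2:ℕ) : ZMod n)) ∈ C := by
    rw [hmemC]
    have h2 : rho u (u + ((2:ℕ):ZMod n)) = 2 := rho_add_nat u (by omega)
    constructor
    · intro h; rw [h, rho_self] at h2; omega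
    · intro h; rw [h, h1] at h2; omega
  apply anchor_seg_connected hn B' C _ hzmem
  intro w hw i hi
  rw [hmemC] at hw ⊢
  have hw1 : 0 < rho u w := rho_pos_of_ne hw.1
  have hw2 : rho u w ≠ 1 := by
    intro h
    apply hw.2
    have := eq_add_rho u w
    rw [h, Nat.cast_one] at this
    exact this
  have hz2 : rho u (u + ((2:ℕ):ZMod n)) = 2 := rho_add_nat u (by omega)
  have hsub : rho (u + ((2:ℕ):ZMod n)) w = rho u w - 2 := by
    have := rho_sub (show rho u (u + ((2:ℕ):ZMod n)) ≤ rho u w by omega)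
    rw [hz2] at this
    exact this
  rw [hsub] at hi
  have hwn := rho_lt u w
  have hpt : (u + ((2:ℕ):ZMod n)) + (i : ZMod n) = u + ((2 + i : ℕ) : ZMod n) := by
    push_cast; ring
  rw [hpt]
  have h7 : rho u (u + ((2 + i : ℕ) : ZMod n)) = 2 + i := rho_add_nat u (by omega)
  constructor
  · intro h; rw [h, rho_self] at h7; omega
  · intro h; rw [h, h1] at h7; omega

lemma conn_case_single (hn : 4 ≤ n) (B' : Finset (Sym2 (ZMod n))) (u : ZMod n) :
    ((bpGraph n B').induce ({w : ZMod n | w = u}ᶜ)).Connected := by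
  set C : Set (ZMod n) := {w : ZMod n | w = u}ᶜ with hCdef
  have hmemC : ∀ w : ZMod n, w ∈ C ↔ w ≠ u := by
    intro w; rw [hCdef]; simp
  have hzmem : (u + 1) ∈ C := (hmemC _).mpr (ne_add_one hn u)
  apply anchor_seg_connected hn B' C _ hzmem
  intro w hw i hi
  rw [hmemC] at hw ⊢
  have hw1 : 0 < rho u w := rho_pos_of_ne hw
  have h1 : rho u (u + 1) = 1 := rho_add_one hn u
  have hsub : rho (u + 1) w = rho u w - 1 := by
    have := rho_sub (show rho u (u + 1) ≤ rho u w by omega)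
    rw [h1] at this
    exact this
  rw [hsub] at hi
  have hwn := rho_lt u w
  have hpt : (u + 1) + (i : ZMod n) = u + ((1 + i : ℕ) : ZMod n) := by push_cast; ring
  rw [hpt]
  have h7 : rho u (u + ((1 + i : ℕ) : ZMod n)) = 1 + i := rho_add_nat u (by omega)
  intro h; rw [h, rho_self] at h7; omega

lemma conn_case_empty (hn : 4 ≤ n) (B' : Finset (Sym2 (ZMod n))) :
    ((bpGraph n B').induce (Set.univ : Set (ZMod n))).Connected := by
  apply anchor_seg_connected hn B' Set.univ 0 (Set.mem_univ 0)
  intro w _ i _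
  exact Set.mem_univ _

end Stmt15

namespace Stmt15
open SimpleGraph
open scoped Classical

variable {n : ℕ} [NeZero n]

/-- a chord inside the closed segment `[u, u+K]` which is not the dual of the
crossing brace `estar` must avoid straddling `astar`. -/
lemma side_split {B : Finset (Sym2 (ZMod n))} {d : Sym2 (ZMod n) → Sym2 (ZMod n)}
    (hn : 4 ≤ n)
    (hB : ∀ e ∈ B, ¬ e.IsDiag ∧ ¬ IsBoundaryEdge n e)
    (hmin1 : ∀ s : Finset (ZMod n), s.card ≤ 2 →
      ((bpGraph n B).induce ((↑s : Set (ZMod n))ᶜ)).Connected)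
    (hdnd : ∀ e ∈ B, ¬ (d e).IsDiag)
    (hdual : ∀ e ∈ B, ¬ (((bpGraph n B).deleteEdges {e}).induce
        ({v : ZMod n | v ∈ d e}ᶜ)).Connected)
    (u : ZMod n) (K : ℕ) (hK : K + 2 ≤ n)
    {estar : Sym2 (ZMod n)} {astar bstar : ZMod n}
    (hestarB : estar ∈ B)
    (hestar : estar = s(astar, bstar))
    (hba1 : 0 < rho u astar) (hba2 : rho u astar < K)
    (hbb : K < rho u bstar)
    {e : Sym2 (ZMod n)} (he : e ∈ B) (hne : e ≠ estar)
    (hseg : ∀ w ∈ d e, rho u w ≤ K) :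
    (∀ w ∈ d e, rho u w ≤ rho u astar) ∨ (∀ w ∈ d e, rho astar w ≤ K - rho u astar) := by
  obtain ⟨i, j, x, y, w1, w2, hij, hjm, hx, hy, hrep, herep, hbu, hbv, hs1, hs2, hC3⟩ :=
    keyC hn hB hmin1 hdnd hdual u K hK he hseg
  set r := rho u astar with hrdef
  have hastar : astar = u + (r : ZMod n) := eq_add_rho u astar
  by_cases hstraddle : i < r ∧ r < j
  · exfalso
    have hc1 : Btw x astar y := by
      rw [hx, hy, hastar]
      exact btw_of_coords hstraddle.1 hstraddle.2 (by omega)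
    have hc2 : Btw y bstar x := by
      have hvx : bstar ≠ x := by
        intro h
        rw [h, hx, rho_add_nat u (by omega : i < n)] at hbb
        omega
      have hvy : bstar ≠ y := by
        intro h
        rw [h, hy, rho_add_nat u (by omega : j < n)] at hbb
        omega
      have hyx : y ≠ x := by
        intro h
        have h5 : rho u y = rho u x := by rw [h]
        rw [hx, hy, rho_add_nat u (by omega : i < n),
          rho_add_nat u (by omega : j < n)] at h5
        omega
      rcases btw_trichotomy x y bstar hyx with h | h | h | h
      · exact absurd h hvx
      · exact absurd h hvy
      · exfalso
        obtain ⟨_, _, hlt⟩ := coords_of_btw hx hy hij (by omega) h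
        omega
      · exact h
    exact hC3 estar hestarB (fun h => hne h.symm) astar bstar hestar ⟨hc1, hc2⟩
  · push_neg at hstraddle
    rcases Nat.lt_or_ge i r with h1 | h1
    · -- then j ≤ r
      have h2 : j ≤ r := hstraddle h1
      left
      intro w hw
      rw [hrep, Sym2.mem_iff] at hw
      rcases hw with rfl | rfl
      · rw [hx, rho_add_nat u (by omega : i < n)]; omega
      · rw [hy, rho_add_nat u (by omega : j < n)]; omega
    · right
      intro w hw
      rw [hrep, Sym2.mem_iff] at hw
      have key : ∀ (k : ℕ), k ≤ K → r ≤ k → rho astar (u + (k : ZMod n)) ≤ K - r := by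
        intro k hkm hrk
        have e1 : rho u (u + (k : ZMod n)) = k := rho_add_nat u (by omega)
        have := rho_sub (show rho u astar ≤ rho u (u + (k : ZMod n)) by omega)
        rw [e1, ← hrdef] at this
        rw [this]
        omega
      rcases hw with rfl | rfl
      · rw [hx]; exact key i (by omega) h1
      · rw [hy]; exact key j (by omega) (by omega)

end Stmt15

namespace Stmt15
open SimpleGraph
open scoped Classical

variable {n : ℕ} [NeZero n]

lemma conn_case_pair (hn : 4 ≤ n) {B : Finset (Sym2 (ZMod n))}
    {d : Sym2 (ZMod n) → Sym2 (ZMod n)}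
    (hB : ∀ e ∈ B, ¬ e.IsDiag ∧ ¬ IsBoundaryEdge n e)
    (hcard : B.card = n - 2)
    (hcircuit : ∀ s : Finset (ZMod n), 2 ≤ s.card → s.card < n →
      {e ∈ (bpGraph n B).edgeSet | ∀ v ∈ e, v ∈ s}.ncard ≤ 2 * s.card - 3)
    (hmin1 : ∀ s : Finset (ZMod n), s.card ≤ 2 →
      ((bpGraph n B).induce ((↑s : Set (ZMod n))ᶜ)).Connected)
    (hdnd : ∀ e ∈ B, ¬ (d e).IsDiag)
    (hdual : ∀ e ∈ B, ¬ (((bpGraph n B).deleteEdges {e}).induce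
        ({v : ZMod n | v ∈ d e}ᶜ)).Connected)
    (u v : ZMod n) (hK2 : 2 ≤ rho u v) (hL2 : 2 ≤ rho v u) :
    ((bpGraph n (B.image d)).induce ({w : ZMod n | w = u ∨ w = v}ᶜ)).Connected := by
  have hvu : v ≠ u := by
    intro h; rw [h, rho_self] at hK2; omega
  have huv : u ≠ v := fun h => hvu h.symm
  set K := rho u v with hKdef
  set L := rho v u with hLdef
  have hKL : K + L = n := rho_rev hvu
  have hKn : K ≤ n - 2 := by omega
  have hLn : L ≤ n - 2 := by omega
  set C : Set (ZMod n) := {w : ZMod n | w = u ∨ w = v}ᶜ with hCdef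
  have hmemC : ∀ w : ZMod n, w ∈ C ↔ (w ≠ u ∧ w ≠ v) := by
    intro w; rw [hCdef]; simp
  have harc1 : ∀ w, Btw u w v → w ∈ C := fun w hw => (hmemC w).mpr ⟨hw.ne_left, hw.ne_right⟩
  have harc2 : ∀ w, Btw v w u → w ∈ C := fun w hw => (hmemC w).mpr ⟨hw.ne_right, hw.ne_left⟩
  by_cases hcross : ∃ e ∈ B, ∃ p q : ZMod n, d e = s(p, q) ∧ Btw u p v ∧ Btw v q u
  · -- a crossing dual brace gives connectivity
    obtain ⟨e, heB, p, q, hpq, hbp, hbq⟩ := hcross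
    have hpC : p ∈ C := harc1 p hbp
    have hqC : q ∈ C := harc2 q hbq
    set Gd := bpGraph n (B.image d) with hGd
    have hadj : ∀ w : ZMod n, w ∈ C → (w + 1) ∈ C → Gd.Adj w (w + 1) :=
      fun w _ _ => bp_adj_step hn _ w
    have hpqne : p ≠ q := by
      intro h
      exact btw_asymm hn hvu ⟨hbp, h ▸ hbq⟩
    have hedge : Gd.Adj p q := by
      apply bp_adj_of_brace _ hpqne
      exact Finset.mem_image.mpr ⟨e, heB, hpq ▸ rfl⟩
    apply connected_of_anchor (⟨p, hpC⟩ : ↥C)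
    intro w
    have hw := (hmemC w.val).mp w.2
    rcases btw_trichotomy u v w.val hvu with h | h | h | h
    · exact absurd h hw.1
    · exact absurd h hw.2
    · exact reach_btw_arc hadj u v harc1 w ⟨p, hpC⟩ h hbp
    · refine (reach_btw_arc hadj v u harc2 w ⟨q, hqC⟩ h hbq).trans ?_
      exact SimpleGraph.Adj.reachable (by exact hedge.symm)
  · exfalso
    have hnc : ∀ e ∈ B, ∀ p q : ZMod n, d e = s(p, q) → Btw u p v → Btw v q u → False :=
      fun e he p q h1 h2 h3 => hcross ⟨e, he, p, q, h1, h2, h3⟩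
    -- find a crossing brace via 3-connectivity of G
    set CG : Set (ZMod n) := (↑({u, v} : Finset (ZMod n)) : Set (ZMod n))ᶜ with hCGdef
    have hmemCG : ∀ w : ZMod n, w ∈ CG ↔ (w ≠ u ∧ w ≠ v) := by
      intro w; rw [hCGdef]; simp
    have hconn := hmin1 {u, v} (by
      apply le_trans (Finset.card_insert_le _ _); simp)
    have hr1 : rho u (u + 1) = 1 := rho_add_one hn u
    have hr1' : rho v (v + 1) = 1 := rho_add_one hn v
    have hpu : (u + 1) ∈ CG := by
      rw [hmemCG]
      refine ⟨ne_add_one hn u, ?_⟩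
      intro h
      rw [h] at hr1; omega
    have hqv : (v + 1) ∈ CG := by
      rw [hmemCG]
      refine ⟨?_, ne_add_one hn v⟩
      intro h
      rw [h] at hr1'; omega
    obtain ⟨wk⟩ := hconn.preconnected ⟨u + 1, hpu⟩ ⟨v + 1, hqv⟩
    have hπ1 : Btw u ((⟨u + 1, hpu⟩ : ↥CG)).val v := ⟨by rw [hr1]; omega, by rw [hr1]; omega⟩
    have hπ2 : ¬ Btw u ((⟨v + 1, hqv⟩ : ↥CG)).val v := by
      intro h
      have h5 : rho u (v + 1) = K + 1 := by
        have := rho_add_of_lt (show rho u v + rho v (v+1) < n by rw [hr1']; omega)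
        rw [hr1'] at this
        exact this
      have := h.2
      rw [h5] at this
      omega
    obtain ⟨A, Bv, hadjAB, hA, hBv⟩ := walk_switch (fun c => Btw u c.val v) wk hπ1 hπ2
    have hAC := (hmemCG A.val).mp A.2
    have hBC := (hmemCG Bv.val).mp Bv.2
    have hBarc2 : Btw v Bv.val u := by
      rcases btw_trichotomy u v Bv.val hvu with h | h | h | h
      · exact absurd h hBC.1
      · exact absurd h hBC.2
      · exact absurd h hBv
      · exact h
    -- the edge A-Bv is a brace
    have hedgeB : s(A.val, Bv.val) ∈ B := by
      rw [bpGraph, SimpleGraph.fromEdgeSet_adj] at hadjAB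
      rcases hadjAB.1 with h | h
      · exact h
      · exfalso
        obtain ⟨t, ht⟩ := h
        rw [Sym2.eq_iff] at ht
        apply hBv
        rcases ht with ⟨h1, h2⟩ | ⟨h1, h2⟩
        · -- Bv = A + 1
          have h12 := hA.1
          have h13 := hA.2
          have hBA : Bv.val = A.val + 1 := by rw [h2, ← h1]
          have h6 : rho u Bv.val = rho u A.val + 1 := by
            rw [hBA]; exact rho_succ (by omega)
          have h7 : rho u Bv.val ≠ K := by
            intro h8
            exact hBC.2 (rho_inj (h8.trans hKdef))
          exact ⟨by omega, by omega⟩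
        · -- A = Bv + 1
          have hAB : A.val = Bv.val + 1 := by rw [h1, ← h2]
          have hBn : rho u Bv.val + 1 < n := by
            have h8 := rho_lt u Bv.val
            rcases Nat.lt_or_ge (rho u Bv.val + 1) n with h9 | h9
            · exact h9
            · exfalso
              have h10 : rho u Bv.val = n - 1 := by omega
              have h11 : A.val = u := by
                rw [hAB, eq_add_rho u Bv.val, h10]
                have : ((n - 1 : ℕ) : ZMod n) + 1 = ((n : ℕ) : ZMod n) := by
                  push_cast [Nat.cast_sub (show 1 ≤ n by omega)]; ring
                rw [add_assoc, this, ZMod.natCast_self, add_zero]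
              exact hAC.1 h11
          have h6 : rho u A.val = rho u Bv.val + 1 := by
            rw [hAB]; exact rho_succ hBn
          have h12 := hA.1
          have h13 := hA.2
          have h14 : 0 < rho u Bv.val := rho_pos_of_ne hBC.1
          exact ⟨by omega, by omega⟩
    -- set up the crossing brace
    set estar : Sym2 (ZMod n) := s(A.val, Bv.val) with hestardef
    set astar : ZMod n := A.val with hastardef
    set bstar : ZMod n := Bv.val with hbstardef
    have hba1 : 0 < rho u astar := hA.1
    have hba2 : rho u astar < K := hA.2
    have hbb1 : 0 < rho v bstar := hBarc2.1
    have hbb2 : rho v bstar < L := hBarc2.2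
    have hbbK : K < rho u bstar := by
      have := rho_add_of_lt (show rho u v + rho v bstar < n by omega)
      omega
    have hbaL : L < rho v astar := by
      have := rho_add_of_lt (show rho v u + rho u astar < n by omega)
      omega
    -- classification of all other dual braces
    set r1 := rho u astar with hr1def
    set r3 := rho v bstar with hr3def
    have hclass : ∀ e ∈ B.erase estar,
        (∀ w ∈ d e, rho u w ≤ r1) ∨ (∀ w ∈ d e, rho astar w ≤ K - r1) ∨
        (∀ w ∈ d e, rho v w ≤ r3) ∨ (∀ w ∈ d e, rho bstar w ≤ L - r3) := by
      intro e he'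
      rw [Finset.mem_erase] at he'
      obtain ⟨hne, heB⟩ := he'
      obtain ⟨x, y, hrep⟩ := sym2_rep (d e)
      have hxyne : x ≠ y := by
        intro h
        exact hdnd e heB (by rw [hrep, h]; exact Sym2.mk_isDiag_iff.mpr rfl)
      -- side determination for each endpoint
      have hcases : ∀ w : ZMod n, (rho u w ≤ K ∧ rho v w ≤ L) ∨ Btw u w v ∨ Btw v w u := by
        intro w
        rcases btw_trichotomy u v w hvu with h | h | h | h
        · left; rw [h, rho_self]; constructor <;> omega
        · left; rw [h, rho_self]; constructor <;> omega
        · right; left; exact h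
        · right; right; exact h
      have hS1 : ∀ w, Btw u w v → rho u w ≤ K := fun w hw => le_of_lt hw.2
      have hS2 : ∀ w, Btw v w u → rho v w ≤ L := fun w hw => le_of_lt hw.2
      have hside : (rho u x ≤ K ∧ rho u y ≤ K) ∨ (rho v x ≤ L ∧ rho v y ≤ L) := by
        rcases hcases x with hx | hx | hx
        · rcases hcases y with hy | hy | hy
          · exact Or.inl ⟨hx.1, hy.1⟩
          · exact Or.inl ⟨hx.1, hS1 y hy⟩
          · exact Or.inr ⟨hx.2, hS2 y hy⟩
        · rcases hcases y with hy | hy | hy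
          · exact Or.inl ⟨hS1 x hx, hy.1⟩
          · exact Or.inl ⟨hS1 x hx, hS1 y hy⟩
          · exact absurd (hnc e heB x y hrep hx hy) (fun h => h)
        · rcases hcases y with hy | hy | hy
          · exact Or.inr ⟨hS2 x hx, hy.2⟩
          · exact absurd (hnc e heB y x (hrep.trans Sym2.eq_swap) hy hx) (fun h => h)
          · exact Or.inr ⟨hS2 x hx, hS2 y hy⟩
      rcases hside with ⟨hx1, hy1⟩ | ⟨hx2, hy2⟩
      · -- chord in the closed segment [u, u+K]
        have hseg : ∀ w ∈ d e, rho u w ≤ K := by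
          intro w hw
          rw [hrep, Sym2.mem_iff] at hw
          rcases hw with rfl | rfl
          · exact hx1
          · exact hy1
        rcases side_split hn hB hmin1 hdnd hdual u K (by omega) hedgeB rfl hba1 hba2 hbbK
          heB hne hseg with h | h
        · exact Or.inl h
        · exact Or.inr (Or.inl h)
      · -- chord in the closed segment [v, v+L]
        have hseg : ∀ w ∈ d e, rho v w ≤ L := by
          intro w hw
          rw [hrep, Sym2.mem_iff] at hw
          rcases hw with rfl | rfl
          · exact hx2
          · exact hy2
        rcases side_split hn hB hmin1 hdnd hdual v L (by omega) hedgeB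
          (hestardef.trans Sym2.eq_swap) hbb1 hbb2 hbaL heB hne hseg with h | h
        · exact Or.inr (Or.inr (Or.inl h))
        · exact Or.inr (Or.inr (Or.inr h))
    -- counting
    set G1 := B.filter (fun e => ∀ w ∈ d e, rho u w ≤ r1) with hG1def
    set G2 := B.filter (fun e => ∀ w ∈ d e, rho astar w ≤ K - r1) with hG2def
    set G3 := B.filter (fun e => ∀ w ∈ d e, rho v w ≤ r3) with hG3def
    set G4 := B.filter (fun e => ∀ w ∈ d e, rho bstar w ≤ L - r3) with hG4def
    have hsub : B.erase estar ⊆ (G1 ∪ G2) ∪ (G3 ∪ G4) := by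
      intro e he'
      have heB : e ∈ B := Finset.mem_of_mem_erase he'
      rcases hclass e he' with h | h | h | h
      · exact Finset.mem_union_left _ (Finset.mem_union_left _ (Finset.mem_filter.mpr ⟨heB, h⟩))
      · exact Finset.mem_union_left _ (Finset.mem_union_right _ (Finset.mem_filter.mpr ⟨heB, h⟩))
      · exact Finset.mem_union_right _ (Finset.mem_union_left _ (Finset.mem_filter.mpr ⟨heB, h⟩))
      · exact Finset.mem_union_right _ (Finset.mem_union_right _ (Finset.mem_filter.mpr ⟨heB, h⟩))
    have hcD := claimD hn hB hcircuit hmin1 hdnd hdual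
    have hc1 : G1.card ≤ r1 - 1 := hcD r1 u (by omega) (by omega)
    have hc2 : G2.card ≤ (K - r1) - 1 := hcD (K - r1) astar (by omega) (by omega)
    have hc3 : G3.card ≤ r3 - 1 := hcD r3 v (by omega) (by omega)
    have hc4 : G4.card ≤ (L - r3) - 1 := hcD (L - r3) bstar (by omega) (by omega)
    have herased : (B.erase estar).card = n - 3 := by
      rw [Finset.card_erase_of_mem hedgeB, hcard]
      omega
    have hfinal : (B.erase estar).card ≤ G1.card + G2.card + G3.card + G4.card := by
      calc (B.erase estar).card ≤ ((G1 ∪ G2) ∪ (G3 ∪ G4)).card := Finset.card_le_card hsub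
        _ ≤ (G1 ∪ G2).card + (G3 ∪ G4).card := Finset.card_union_le _ _
        _ ≤ G1.card + G2.card + (G3.card + G4.card) := by
            have := Finset.card_union_le G1 G2
            have := Finset.card_union_le G3 G4
            omega
        _ = G1.card + G2.card + G3.card + G4.card := by omega
    omega

end Stmt15


open Stmt15

/-- Let `G` be a minimally 3-connected braced polygonal circuit on
`n` vertices (so `G` has exactly `n - 2` braces and satisfies the circuit count
condition), and let `d` pick a dual brace for each brace.  Then the dual polygon
`G*` (boundary cycle together with the dual braces) is 3-connected. -/
theorem stmt15 (n : ℕ) [NeZero n] (hn : 4 ≤ n) (B : Finset (Sym2 (ZMod n)))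
    (hB : ∀ e ∈ B, ¬ e.IsDiag ∧ ¬ IsBoundaryEdge n e)
    (hcard : B.card = n - 2)
    (hcircuit : ∀ s : Finset (ZMod n), 2 ≤ s.card → s.card < n →
      {e ∈ (bpGraph n B).edgeSet | ∀ v ∈ e, v ∈ s}.ncard ≤ 2 * s.card - 3)
    (hmin : MinThreeConnectedBP n B)
    (d : Sym2 (ZMod n) → Sym2 (ZMod n))
    (hdnd : ∀ e ∈ B, ¬ (d e).IsDiag)
    (hdual : ∀ e ∈ B,
      ¬ (((bpGraph n B).deleteEdges {e}).induce
          ({v : ZMod n | v ∈ d e}ᶜ)).Connected) :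
    ThreeConnected (bpGraph n (B.image d)) := by
  obtain ⟨hc4, hmin1⟩ := hmin.1
  refine ⟨?_, ?_⟩
  · rw [ZMod.card]; exact hn
  intro s hs
  rcases Nat.lt_or_ge s.card 2 with h2 | h2
  · rcases Nat.lt_or_ge s.card 1 with h1 | h1
    · have hse : s = ∅ := Finset.card_eq_zero.mp (by omega)
      subst hse
      have hset : ((↑(∅ : Finset (ZMod n)) : Set (ZMod n))ᶜ) = (Set.univ : Set (ZMod n)) := by
        simp
      rw [hset]
      exact conn_case_empty hn _
    · obtain ⟨u, rfl⟩ := Finset.card_eq_one.mp (Nat.le_antisymm (Nat.lt_succ_iff.mp h2) h1)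
      have hset : ((↑({u} : Finset (ZMod n)) : Set (ZMod n))ᶜ) = ({w : ZMod n | w = u}ᶜ) := by
        ext w; simp
      rw [hset]
      exact conn_case_single hn _ u
  · have h2' : s.card = 2 := le_antisymm hs h2
    obtain ⟨u, v, huv, rfl⟩ := Finset.card_eq_two.mp h2'
    have hvu : v ≠ u := fun h => huv h.symm
    have hKpos : 0 < rho u v := rho_pos_of_ne hvu
    have hLpos : 0 < rho v u := rho_pos_of_ne huv
    by_cases hK1 : rho u v = 1
    · have hv : v = u + 1 := by
        have := eq_add_rho u v
        rw [hK1, Nat.cast_one] at this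
        exact this
      have hset : ((↑({u, v} : Finset (ZMod n)) : Set (ZMod n))ᶜ) =
          ({w : ZMod n | w = u ∨ w = u + 1}ᶜ) := by
        ext w; simp [hv]
      rw [hset]
      exact conn_case_adjacent hn _ u
    by_cases hL1 : rho v u = 1
    · have hu : u = v + 1 := by
        have := eq_add_rho v u
        rw [hL1, Nat.cast_one] at this
        exact this
      have hset : ((↑({u, v} : Finset (ZMod n)) : Set (ZMod n))ᶜ) =
          ({w : ZMod n | w = v ∨ w = v + 1}ᶜ) := by
        ext w; simp [hu]; tauto
      rw [hset]
      exact conn_case_adjacent hn _ v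
    · have hset : ((↑({u, v} : Finset (ZMod n)) : Set (ZMod n))ᶜ) =
          ({w : ZMod n | w = u ∨ w = v}ᶜ) := by
        ext w; simp
      rw [hset]
      exact conn_case_pair hn hB hcard hcircuit hmin1 hdnd hdual u v (by omega) (by omega)
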